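/- Let ψ₀ ∈ (0,1), c ∈ ℝ, and λ ∈ ℝ with 1 + λc > 0. Define ψ = ψ₀·(1 + λc)/(1 + λc·ψ₀). Then 1 + λc·ψ₀ > 0, ψ ∈ (0,1), and (1 − ψ₀)/(1 − ψ) − ψ₀/ψ − λc·ψ₀/ψ = 0. -/

import Mathlib

/-- Closed-form constraint-specific path for the "equalized risk among the cases"
constraint under cross-entropy risk: `ψ = ψ₀(1 + λc)/(1 + λcψ₀)` is a valid
probability and solves the stationarity equation
`(1-ψ₀)/(1-ψ) - ψ₀/ψ - λc·ψ₀/ψ = 0`. -/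
theorem equalized_risk_cases_path
    (ψ₀ c lam : ℝ) (hψ₀ : ψ₀ ∈ Set.Ioo (0 : ℝ) 1) (hpos : 0 < 1 + lam * c) :
    0 < 1 + lam * c * ψ₀ ∧
    (let ψ : ℝ := ψ₀ * (1 + lam * c) / (1 + lam * c * ψ₀)
     ψ ∈ Set.Ioo (0 : ℝ) 1 ∧
     (1 - ψ₀) / (1 - ψ) - ψ₀ / ψ - lam * c * ψ₀ / ψ = 0) := by
  obtain ⟨h0, h1⟩ := hψ₀
  have hd : 0 < 1 + lam * c * ψ₀ := by nlinarith
  refine ⟨hd, ?_, ?_⟩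
  · constructor
    · positivity
    · rw [div_lt_one hd]; nlinarith
  · have hψpos : 0 < ψ₀ * (1 + lam * c) / (1 + lam * c * ψ₀) := by positivity
    have hψlt : ψ₀ * (1 + lam * c) / (1 + lam * c * ψ₀) < 1 := by
      rw [div_lt_one hd]; nlinarith
    have h1ψ : 1 - ψ₀ * (1 + lam * c) / (1 + lam * c * ψ₀) ≠ 0 := by linarith
    have hψne : ψ₀ * (1 + lam * c) / (1 + lam * c * ψ₀) ≠ 0 := ne_of_gt hψpos
    have h10 : (1:ℝ) - ψ₀ ≠ 0 := by linarith
    rw [div_sub_div _ _ h1ψ hψne, div_sub_div _ _ (mul_ne_zero h1ψ hψne) hψne, div_eq_zero_iff]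
    left
    have hd' : 1 + ψ₀ * lam * c ≠ 0 := by nlinarith
    field_simp
    ring
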